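/- Fix a C-sequence and a rationally independent sequence ⟨z_α : α < ω₁⟩ in the unit circle. Then Moore's L-space 𝓛 is not a Q-set space: there exists a subset A ⊆ 𝓛 that is not a Gδ set in the subspace topology of 𝓛. -/

import Mathlib

noncomputable section

open Set Ordinal TopologicalSpace Topology

/-- The first uncountable ordinal. -/
def omega1 : Ordinal := (Cardinal.aleph 1).ord

/-- `C` is a C-sequence: `C 0 = ∅`, `C (α+1) = {α}`, and for every limit `α < ω₁`,
`C α` is a cofinal subset of `α` meeting every initial segment in a finite set. -/
def IsCSeq (C : Ordinal → Set Ordinal) : Prop :=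
  C 0 = ∅ ∧ (∀ α, C (α + 1) = {α}) ∧
  ∀ α, α < omega1 → Order.IsSuccLimit α →
    (∀ ξ ∈ C α, ξ < α) ∧ (∀ ξ < α, ∃ η ∈ C α, ξ ≤ η) ∧ ∀ ξ < α, (C α ∩ Iio ξ).Finite

/-- `min (C β \ α)`. -/
def minAbove (C : Ordinal → Set Ordinal) (α β : Ordinal) : Ordinal :=
  sInf {ξ ∈ C β | α ≤ ξ}

/-- `max (C β ∩ α)`. -/
def maxBelow (C : Ordinal → Set Ordinal) (α β : Ordinal) : Ordinal :=
  sSup (C β ∩ Iio α)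

/-- `U` is the upper trace function of the C-sequence `C`:
`U(α,α) = ∅` and `U(α,β) = U(α, min (C β \ α)) ∪ {β}` for `α < β`. -/
def UpperSpec (C : Ordinal → Set Ordinal) (U : Ordinal → Ordinal → Set Ordinal) : Prop :=
  (∀ α, U α α = ∅) ∧ ∀ α β, α < β → U α β = U α (minAbove C α β) ∪ {β}

/-- `L` is the lower trace function of the C-sequence `C`: `L(α,α) = ∅`,
`L(α,β) = L(α, min (C β \ α))` when `C β ∩ α = ∅`, and otherwise
`L(α,β) = {ζ ∈ L(α, min (C β \ α)) ∪ {max (C β ∩ α)} : ζ ≥ max (C β ∩ α)}`. -/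
def LowerSpec (C : Ordinal → Set Ordinal) (L : Ordinal → Ordinal → Set Ordinal) : Prop :=
  (∀ α, L α α = ∅) ∧
  (∀ α β, α < β → C β ∩ Iio α = ∅ → L α β = L α (minAbove C α β)) ∧
  ∀ α β, α < β → (C β ∩ Iio α).Nonempty →
    L α β = {ζ ∈ L α (minAbove C α β) ∪ {maxBelow C α β} | maxBelow C α β ≤ ζ}

/-- `e` is the maximal weight function: `e β α = max {|C ξ ∩ α| : ξ ∈ U(α,β)}`
(here `e β` plays the role of `e_β : β → ω`). -/
def ESpec (C : Ordinal → Set Ordinal) (U : Ordinal → Ordinal → Set Ordinal)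
    (e : Ordinal → Ordinal → ℕ) : Prop :=
  ∀ α β, α < β → e β α = sSup {n : ℕ | ∃ ξ ∈ U α β, n = (C ξ ∩ Iio α).ncard}

/-- `osc` is the oscillation function: for `α < β`, `osc α β` is the number of
`ζ ∈ L(α,β) \ {min L(α,β)}` such that `e_α(ζ⁻) ≤ e_β(ζ⁻)` and `e_α(ζ) > e_β(ζ)`,
where `ζ⁻ = max {η ∈ L(α,β) : η < ζ}` is the immediate predecessor of `ζ` in the
increasing enumeration of the (finite) set `L(α,β)`; and `osc α α = 0`. -/
def OscSpec (L : Ordinal → Ordinal → Set Ordinal) (e : Ordinal → Ordinal → ℕ)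
    (osc : Ordinal → Ordinal → ℕ) : Prop :=
  (∀ α, osc α α = 0) ∧
  ∀ α β, α < β →
    osc α β = Set.ncard {ζ | ζ ∈ L α β ∧ ζ ≠ sInf (L α β) ∧
      e α (sSup {η ∈ L α β | η < ζ}) ≤ e β (sSup {η ∈ L α β | η < ζ}) ∧
      e β ζ < e α ζ}

/-- `z` is a rationally independent sequence in the unit circle (indexed by `ω₁`):
each `z α` has modulus `1`, and any product `∏ z α ^ k α = 1` over a finite set of
indices below `ω₁` forces all the integer exponents to vanish. -/
def RatIndep (z : Ordinal → ℂ) : Prop :=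
  (∀ α < omega1, ‖z α‖ = 1) ∧
  ∀ (s : Finset Ordinal) (k : Ordinal → ℤ), (∀ α ∈ s, α < omega1) →
    ∏ α ∈ s, z α ^ k α = 1 → ∀ α ∈ s, k α = 0

/-- `w β : ω₁ → 𝒮`, `w β α = o(α,β) = z α ^ (osc(α,β)+1)` for `α < β` and `1` otherwise. -/
def wFn (z : Ordinal → ℂ) (osc : Ordinal → Ordinal → ℕ) (β α : Ordinal) : ℂ :=
  if α < β then z α ^ (osc α β + 1) else 1

/-- Moore's L-space `𝓛 = {w_β : β < ω₁}`, a subset of the product `𝒮^{ω₁} ⊆ ℂ^{ω₁}`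
(with the product topology). -/
def MooreL (z : Ordinal → ℂ) (osc : Ordinal → Ordinal → ℕ) :
    Set ({a : Ordinal // a < omega1} → ℂ) :=
  {g | ∃ β < omega1, ∀ i, g i = wFn z osc β i.1}


section Basics

lemma omega1_isLimit : Order.IsSuccLimit omega1 :=
  Cardinal.isSuccLimit_ord (Cardinal.aleph0_le_aleph 1)

lemma succ_lt_omega1 {α : Ordinal} (h : α < omega1) : α + 1 < omega1 := by
  rw [Ordinal.add_one_eq_succ]
  exact omega1_isLimit.succ_lt h

lemma ord_lt_succ (x : Ordinal) : x < x + 1 := by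
  rw [Ordinal.add_one_eq_succ]; exact Order.lt_succ x

lemma omega1_pos : (0 : Ordinal) < omega1 := omega1_isLimit.pos

lemma sup_lt_omega1 {ι : Type} [Countable ι] (f : ι → Ordinal)
    (h : ∀ i, f i < omega1) : (⨆ i, f i) < omega1 :=
  by
    have h' : ∀ i, f i < Ordinal.omega 1 := by simpa [omega1, Cardinal.ord_aleph] using h
    simpa [omega1, Cardinal.ord_aleph] using Ordinal.iSup_lt_omega_one h'

lemma countable_Iio {β : Ordinal} (hβ : β < omega1) : (Set.Iio β).Countable := by
  rw [← Cardinal.le_aleph0_iff_set_countable, Ordinal.mk_Iio_ordinal]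
  have h1 : β.card < Cardinal.aleph 1 := (Cardinal.lt_ord).1 hβ
  have h2 : β.card ≤ Cardinal.aleph0 := by
    have : Cardinal.aleph 1 = Order.succ (Cardinal.aleph 0) := by
      rw [← Cardinal.aleph_succ]; norm_num
    rw [this, Order.lt_succ_iff, Cardinal.aleph_zero] at h1
    exact h1
  exact (Cardinal.lift_le.2 h2).trans (le_of_eq Cardinal.lift_aleph0)

lemma countable_Iic {β : Ordinal} (hβ : β < omega1) : (Set.Iic β).Countable := by
  have : Set.Iic β = Set.Iio (β + 1) := by
    ext x; rw [Set.mem_Iic, Set.mem_Iio, Ordinal.add_one_eq_succ, Order.lt_succ_iff]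
  rw [this]
  exact countable_Iio (succ_lt_omega1 hβ)

lemma uncount_pigeon {κ : Type*} [Countable κ] {S : Set Ordinal} (hS : ¬ S.Countable)
    (g : Ordinal → κ) : ∃ k, ¬ ({x | x ∈ S ∧ g x = k}).Countable := by
  by_contra h
  push_neg at h
  apply hS
  have hcov : S = ⋃ k : κ, {x | x ∈ S ∧ g x = k} := by
    ext x; constructor
    · intro hx; exact Set.mem_iUnion.2 ⟨g x, hx, rfl⟩
    · rintro hx; obtain ⟨k, hk, -⟩ := Set.mem_iUnion.1 hx; exact hk
  rw [hcov]
  exact Set.countable_iUnion (fun k => h k)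

lemma uncount_diff {S T : Set Ordinal} (hS : ¬ S.Countable) (hT : T.Countable) :
    ¬ (S \ T).Countable := by
  intro h
  exact hS (((h.union hT)).mono (fun x hx => by
    by_cases hxT : x ∈ T
    · exact Or.inr hxT
    · exact Or.inl ⟨hx, hxT⟩))

lemma uncount_nonempty {S : Set Ordinal} (hS : ¬ S.Countable) : S.Nonempty := by
  rcases Set.eq_empty_or_nonempty S with rfl | h
  · exact absurd Set.countable_empty hS
  · exact h

lemma uncount_two {S : Set Ordinal} (hS : ¬ S.Countable) (hsub : S ⊆ Set.Iio omega1) :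
    ∃ μ ∈ S, ∃ μ' ∈ S, μ < μ' := by
  obtain ⟨μ, hμ⟩ := uncount_nonempty hS
  have h2 := uncount_diff hS (countable_Iic (hsub hμ))
  obtain ⟨μ', hμ'⟩ := uncount_nonempty h2
  exact ⟨μ, hμ, μ', hμ'.1, not_le.1 (fun h => hμ'.2 h)⟩

end Basics

section Club

/-- closed unbounded subsets of `ω₁` (as sets of ordinals). -/
def IsClubO (Cl : Set Ordinal) : Prop :=
  (∀ α, α < omega1 → ∃ β, β ∈ Cl ∧ α < β ∧ β < omega1) ∧
  (∀ δ, δ < omega1 → 0 < δ → (∀ γ, γ < δ → ∃ β, β ∈ Cl ∧ γ < β ∧ β < δ) → δ ∈ Cl)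

/-- stationary subsets of `ω₁`. -/
def IsStatO (S : Set Ordinal) : Prop :=
  ∀ Cl, IsClubO Cl → ∃ x, x ∈ S ∧ x ∈ Cl

/-- Chains for building limit points. -/
lemma chain_lemma (st : Ordinal → Ordinal)
    (hst : ∀ α, α < omega1 → α < st α ∧ st α < omega1)
    (α₀ : Ordinal) (h₀ : α₀ < omega1) :
    ∃ δ, δ < omega1 ∧ α₀ < δ ∧
      (∀ γ, γ < δ → ∃ β, γ < β ∧ β < δ ∧ β < omega1 ∧ st β < δ) := by
  classical
  let a : ℕ → Ordinal := fun n => Nat.rec (α₀ + 1) (fun _ p => st p) n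
  have ha0 : a 0 = α₀ + 1 := rfl
  have haS : ∀ n, a (n + 1) = st (a n) := fun n => rfl
  have hlt : ∀ n, a n < omega1 ∧ a n < a (n + 1) := by
    intro n
    induction n with
    | zero =>
      have h1 : a 0 < omega1 := by rw [ha0]; exact succ_lt_omega1 h₀
      exact ⟨h1, by rw [haS]; exact (hst _ h1).1⟩
    | succ k ih =>
      have h1 : a (k + 1) < omega1 := by rw [haS]; exact (hst _ ih.1).2
      exact ⟨h1, by rw [haS (k+1)]; exact (hst _ h1).1⟩
  have hmono : ∀ m n, m < n → a m < a n := by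
    intro m n h
    induction n with
    | zero => omega
    | succ k ih =>
      rcases Nat.lt_succ_iff_lt_or_eq.1 h with h' | h'
      · exact (ih h').trans (hlt k).2
      · subst h'; exact (hlt m).2
  have hbdd : BddAbove (Set.range a) := Ordinal.bddAbove_range a
  refine ⟨⨆ n, a n, sup_lt_omega1 a (fun n => (hlt n).1), ?_, ?_⟩
  · calc α₀ < a 0 := by rw [ha0]; exact ord_lt_succ α₀
      _ < a 1 := (hlt 0).2
      _ ≤ ⨆ n, a n := le_ciSup hbdd 1
  · intro γ hγ
    obtain ⟨k, hk⟩ := (lt_ciSup_iff hbdd).1 hγ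
    refine ⟨a k, hk, ?_, (hlt k).1, ?_⟩
    · exact lt_of_lt_of_le (hlt k).2 (le_ciSup hbdd (k+1))
    · rw [← haS]
      exact lt_of_lt_of_le (hlt (k+1)).2 (le_ciSup hbdd (k+2))

lemma club_iInter (Cs : ℕ → Set Ordinal) (h : ∀ n, IsClubO (Cs n)) :
    IsClubO (⋂ n, Cs n) := by
  classical
  constructor
  · -- unbounded
    intro α hα
    have hpick : ∀ (n : ℕ) (x : Ordinal), ∃ β, x < omega1 → (β ∈ Cs n ∧ x < β ∧ β < omega1) := by
      intro n x
      by_cases hx : x < omega1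
      · obtain ⟨β, hβ⟩ := (h n).1 x hx
        exact ⟨β, fun _ => hβ⟩
      · exact ⟨0, fun hx' => absurd hx' hx⟩
    choose pick hpick using hpick
    set st : Ordinal → Ordinal := fun x => (⨆ n, pick n x) + 1 with hst_def
    have hst : ∀ x, x < omega1 → x < st x ∧ st x < omega1 := by
      intro x hx
      have h1 : ∀ n, pick n x < omega1 := fun n => (hpick n x hx).2.2
      have h2 : (⨆ n, pick n x) < omega1 := sup_lt_omega1 _ h1
      constructor
      · calc x < pick 0 x := (hpick 0 x hx).2.1
          _ ≤ ⨆ n, pick n x := le_ciSup (Ordinal.bddAbove_range _) 0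
          _ < st x := ord_lt_succ _
      · exact succ_lt_omega1 h2
    obtain ⟨δ, hδω, hαδ, hδ⟩ := chain_lemma st hst α hα
    have hδpos : 0 < δ := lt_of_le_of_lt ((zero_le : 0 ≤ α)) hαδ
    have hmem : ∀ n, δ ∈ Cs n := by
      intro n
      apply (h n).2 δ hδω hδpos
      intro γ hγ
      obtain ⟨β, hγβ, hβδ, hβω, hstβ⟩ := hδ γ hγ
      refine ⟨pick n β, (hpick n β hβω).1, hγβ.trans (hpick n β hβω).2.1, ?_⟩
      calc pick n β ≤ ⨆ m, pick m β := le_ciSup (Ordinal.bddAbove_range _) n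
        _ < st β := ord_lt_succ _
        _ < δ := hstβ
    exact ⟨δ, Set.mem_iInter.2 hmem, hαδ, hδω⟩
  · -- closed
    intro δ hδω hδpos hcof
    apply Set.mem_iInter.2
    intro n
    apply (h n).2 δ hδω hδpos
    intro γ hγ
    obtain ⟨β, hβ, h1, h2⟩ := hcof γ hγ
    exact ⟨β, Set.mem_iInter.1 hβ n, h1, h2⟩

lemma stat_limitSet : IsStatO {δ | δ < omega1 ∧ Order.IsSuccLimit δ} := by
  classical
  intro Cl hCl
  have hpick : ∀ (x : Ordinal), ∃ β, x < omega1 → (β ∈ Cl ∧ x < β ∧ β < omega1) := by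
    intro x
    by_cases hx : x < omega1
    · obtain ⟨β, hβ⟩ := hCl.1 x hx
      exact ⟨β, fun _ => hβ⟩
    · exact ⟨0, fun hx' => absurd hx' hx⟩
  choose pick hpick using hpick
  have hst : ∀ x, x < omega1 → x < pick x ∧ pick x < omega1 :=
    fun x hx => ⟨(hpick x hx).2.1, (hpick x hx).2.2⟩
  obtain ⟨δ, hδω, hδpos', hδ⟩ := chain_lemma pick hst 0 omega1_pos
  have hδpos : 0 < δ := hδpos'
  have hδCl : δ ∈ Cl := by
    apply hCl.2 δ hδω hδpos
    intro γ hγ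
    obtain ⟨β, hγβ, hβδ, hβω, hstβ⟩ := hδ γ hγ
    exact ⟨pick β, (hpick β hβω).1, hγβ.trans (hst β hβω).1, hstβ⟩
  have hδlim : Order.IsSuccLimit δ := by
    rw [Ordinal.isSuccLimit_iff]
    refine ⟨hδpos.ne', Order.isSuccPrelimit_of_succ_lt ?_⟩
    intro x hx
    obtain ⟨β, hγβ, hβδ, hβω, hstβ⟩ := hδ x hx
    have : x + 1 ≤ β := by
      rw [Ordinal.add_one_eq_succ]; exact Order.succ_le_of_lt hγβ
    rw [← Ordinal.add_one_eq_succ]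
    exact lt_of_le_of_lt this hβδ
  exact ⟨δ, ⟨hδω, hδlim⟩, hδCl⟩

lemma stat_pigeon {S : Set Ordinal} (hS : IsStatO S) (g : Ordinal → ℕ) :
    ∃ n, IsStatO {x | x ∈ S ∧ g x = n} := by
  by_contra hcon
  push_neg at hcon
  have hD : ∀ n, ∃ D, IsClubO D ∧ ∀ x, x ∈ S → g x = n → x ∉ D := by
    intro n
    have := hcon n
    unfold IsStatO at this
    push_neg at this
    obtain ⟨D, hD1, hD2⟩ := this
    exact ⟨D, hD1, fun x hx hgx hxD => hD2 x ⟨hx, hgx⟩ hxD⟩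
  choose D hD1 hD2 using hD
  obtain ⟨x, hxS, hxD⟩ := hS (⋂ n, D n) (club_iInter D hD1)
  exact hD2 (g x) x hxS rfl (Set.mem_iInter.1 hxD (g x))

lemma weak_fodor {S : Set Ordinal} (hS : IsStatO S) (hsub : S ⊆ Set.Iio omega1)
    (f : Ordinal → Ordinal) (hreg : ∀ μ ∈ S, f μ < μ) :
    ∃ γ, γ < omega1 ∧ ¬ ({μ | μ ∈ S ∧ f μ ≤ γ}).Countable := by
  classical
  by_contra hcon
  push_neg at hcon
  -- enumerations of the (countable) sets {μ ∈ S | f μ ≤ γ}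
  have henum : ∀ γ, ∃ en : ℕ → Ordinal, (∀ n, en n < omega1) ∧
      (γ < omega1 → ∀ x, x ∈ S → f x ≤ γ → ∃ n, en n = x) := by
    intro γ
    by_cases hγ : γ < omega1
    · rcases Set.eq_empty_or_nonempty {μ | μ ∈ S ∧ f μ ≤ γ} with hem | hne
      · refine ⟨fun _ => 0, fun _ => omega1_pos, fun _ x hx hfx => ?_⟩
        exact absurd (Set.eq_empty_iff_forall_notMem.1 hem x ⟨hx, hfx⟩) (fun h => h)
      · obtain ⟨en, hen⟩ := (hcon γ hγ).exists_eq_range hne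
        refine ⟨en, ?_, ?_⟩
        · intro n
          have : en n ∈ {μ | μ ∈ S ∧ f μ ≤ γ} := by rw [hen]; exact ⟨n, rfl⟩
          exact hsub this.1
        · intro _ x hx hfx
          have : x ∈ Set.range en := by rw [← hen]; exact ⟨hx, hfx⟩
          obtain ⟨n, hn⟩ := this
          exact ⟨n, hn⟩
    · exact ⟨fun _ => 0, fun _ => omega1_pos, fun h => absurd h hγ⟩
  choose en hen1 hen2 using henum
  set b : Ordinal → Ordinal := fun γ => ⨆ n, (en γ n + 1) with hb_def
  have hbω : ∀ γ, b γ < omega1 :=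
    fun γ => sup_lt_omega1 _ (fun n => succ_lt_omega1 (hen1 γ n))
  have hble : ∀ γ x, x ∈ S → f x ≤ γ → γ < omega1 → x < b γ := by
    intro γ x hx hfx hγ
    obtain ⟨n, hn⟩ := hen2 γ hγ x hx hfx
    calc x < x + 1 := ord_lt_succ x
      _ = en γ n + 1 := by rw [hn]
      _ ≤ b γ := le_ciSup (Ordinal.bddAbove_range _) n
  -- enumerations of Iic α
  have henum2 : ∀ α, ∃ e2 : ℕ → Ordinal, (∀ n, e2 n ≤ α) ∧
      (α < omega1 → ∀ γ, γ ≤ α → ∃ n, e2 n = γ) := by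
    intro α
    by_cases hα : α < omega1
    · obtain ⟨e2, he2⟩ := (countable_Iic hα).exists_eq_range ⟨0, (zero_le : 0 ≤ α)⟩
      refine ⟨e2, ?_, ?_⟩
      · intro n
        have : e2 n ∈ Set.Iic α := by rw [he2]; exact ⟨n, rfl⟩
        exact this
      · intro _ γ hγ
        have : γ ∈ Set.range e2 := by rw [← he2]; exact hγ
        obtain ⟨n, hn⟩ := this
        exact ⟨n, hn⟩
    · exact ⟨fun _ => 0, fun _ => (zero_le : 0 ≤ α), fun h => absurd h hα⟩
  choose e2 he21 he22 using henum2
  set st : Ordinal → Ordinal := fun α => max ((⨆ n, (b (e2 α n) + 1))) (α + 1) with hst_def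
  have hst : ∀ α, α < omega1 → α < st α ∧ st α < omega1 := by
    intro α hα
    constructor
    · exact lt_of_lt_of_le (ord_lt_succ α) (le_max_right _ _)
    · apply max_lt
      · exact sup_lt_omega1 _ (fun n => succ_lt_omega1 (hbω (e2 α n)))
      · exact succ_lt_omega1 hα
  have hstb : ∀ α γ, α < omega1 → γ ≤ α → b γ < st α := by
    intro α γ hα hγ
    obtain ⟨n, hn⟩ := he22 α hα γ hγ
    calc b γ < b γ + 1 := ord_lt_succ _
      _ = b (e2 α n) + 1 := by rw [hn]
      _ ≤ ⨆ m, (b (e2 α m) + 1) := le_ciSup (Ordinal.bddAbove_range _) n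
      _ ≤ st α := le_max_left _ _
  set Cl : Set Ordinal := {δ | δ < omega1 ∧ 0 < δ ∧ ∀ γ, γ < δ → b γ < δ} with hCl_def
  have hclub : IsClubO Cl := by
    constructor
    · intro α hα
      obtain ⟨δ, hδω, hαδ, hδ⟩ := chain_lemma st hst α hα
      refine ⟨δ, ⟨hδω, lt_of_le_of_lt ((zero_le : 0 ≤ α)) hαδ, ?_⟩, hαδ, hδω⟩
      intro γ hγ
      obtain ⟨β, hγβ, hβδ, hβω, hstβ⟩ := hδ γ hγ
      exact lt_trans (hstb β γ hβω hγβ.le) hstβ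
    · intro δ hδω hδpos hcof
      refine ⟨hδω, hδpos, ?_⟩
      intro γ hγ
      obtain ⟨β, hβCl, hγβ, hβδ⟩ := hcof γ hγ
      exact lt_trans (hβCl.2.2 γ hγβ) hβδ
  obtain ⟨μ, hμS, hμCl⟩ := hS Cl hclub
  have hfμ : f μ < μ := hreg μ hμS
  have h1 : μ < b (f μ) := hble (f μ) μ hμS le_rfl (lt_trans hfμ (hsub hμS))
  have h2 : b (f μ) < μ := hμCl.2.2 (f μ) hfμ
  exact absurd (lt_trans h1 h2) (lt_irrefl μ)

end Club

section Walks

variable {C : Ordinal → Set Ordinal} {U : Ordinal → Ordinal → Set Ordinal}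
  {L : Ordinal → Ordinal → Set Ordinal} {e : Ordinal → Ordinal → ℕ}
  {osc : Ordinal → Ordinal → ℕ}

lemma minAbove_spec (hC : IsCSeq C) {α β : Ordinal} (hβ : β < omega1) (hαβ : α < β) :
    minAbove C α β ∈ C β ∧ α ≤ minAbove C α β ∧ minAbove C α β < β := by
  have hne : {ξ ∈ C β | α ≤ ξ}.Nonempty := by
    rcases Ordinal.zero_or_succ_or_isSuccLimit β with rfl | ⟨δ, rfl⟩ | hlim
    · exact absurd hαβ (fun h => lt_irrefl _ (lt_of_lt_of_le h (zero_le : 0 ≤ α)))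
    · rw [← Ordinal.add_one_eq_succ, hC.2.1 δ]
      refine ⟨δ, rfl, ?_⟩
      rw [← Ordinal.add_one_eq_succ, Ordinal.add_one_eq_succ, Order.lt_succ_iff] at hαβ
      exact hαβ
    · obtain ⟨η, hη1, hη2⟩ := (hC.2.2 β hβ hlim).2.1 α hαβ
      exact ⟨η, hη1, hη2⟩
  have hmem : minAbove C α β ∈ {ξ ∈ C β | α ≤ ξ} := csInf_mem hne
  refine ⟨hmem.1, hmem.2, ?_⟩
  rcases Ordinal.zero_or_succ_or_isSuccLimit β with rfl | ⟨δ, rfl⟩ | hlim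
  · exact absurd hαβ (fun h => lt_irrefl _ (lt_of_lt_of_le h (zero_le : 0 ≤ α)))
  · rw [← Ordinal.add_one_eq_succ] at hmem ⊢
    have h := hmem.1
    rw [hC.2.1 δ, Set.mem_singleton_iff] at h
    rw [h]
    exact ord_lt_succ δ
  · exact (hC.2.2 β hβ hlim).1 _ hmem.1

lemma maxBelow_spec (hC : IsCSeq C) {α β : Ordinal} (hβ : β < omega1) (hαβ : α < β)
    (hne : (C β ∩ Set.Iio α).Nonempty) : maxBelow C α β ∈ C β ∩ Set.Iio α := by
  rcases Ordinal.zero_or_succ_or_isSuccLimit β with rfl | ⟨δ, rfl⟩ | hlim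
  · exact absurd hαβ (fun h => lt_irrefl _ (lt_of_lt_of_le h (zero_le : 0 ≤ α)))
  · rw [← Ordinal.add_one_eq_succ] at hne ⊢
    unfold maxBelow
    rw [hC.2.1 δ] at hne ⊢
    obtain ⟨x, hx1, hx2⟩ := hne
    rw [Set.mem_singleton_iff] at hx1
    subst hx1
    have h1 : ({x} : Set Ordinal) ∩ Set.Iio α = {x} := by
      apply Set.inter_eq_self_of_subset_left
      intro y hy
      rw [Set.mem_singleton_iff] at hy
      subst hy
      exact hx2
    rw [h1, csSup_singleton]
    exact rfl
  · have hfin : (C β ∩ Set.Iio α).Finite := (hC.2.2 β hβ hlim).2.2 α hαβ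
    exact hne.csSup_mem hfin

lemma L_bounded (hC : IsCSeq C) (hL : LowerSpec C L) :
    ∀ β, β < omega1 → ∀ α, α ≤ β → L α β ⊆ Set.Iio α ∧ (L α β).Finite := by
  intro β
  induction β using Ordinal.induction with
  | _ β IH =>
    intro hβ α hα
    rcases eq_or_lt_of_le hα with rfl | hlt
    · rw [hL.1]; exact ⟨Set.empty_subset _, Set.finite_empty⟩
    · obtain ⟨hmem, hαm, hmlt⟩ := minAbove_spec hC hβ hlt
      have IHm := IH (minAbove C α β) hmlt (hmlt.trans hβ) α hαm
      by_cases hne : (C β ∩ Set.Iio α) = ∅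
      · rw [hL.2.1 α β hlt hne]; exact IHm
      · have hnon : (C β ∩ Set.Iio α).Nonempty := Set.nonempty_iff_ne_empty.2 hne
        have hmb := maxBelow_spec hC hβ hlt hnon
        rw [hL.2.2 α β hlt hnon]
        constructor
        · intro ζ hζ
          rcases hζ.1 with h | h
          · exact IHm.1 h
          · rw [Set.mem_singleton_iff] at h; subst h; exact hmb.2
        · apply Set.Finite.subset (IHm.2.union (Set.finite_singleton (maxBelow C α β)))
          intro ζ hζ
          exact hζ.1

lemma nat_sSup_insert_zero (S : Set ℕ) (hS : S.Nonempty) : sSup (insert 0 S) = sSup S := by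
  by_cases hbdd : BddAbove S
  · apply le_antisymm
    · apply csSup_le (Set.insert_nonempty _ _)
      rintro n (rfl | hn)
      · exact Nat.zero_le _
      · exact le_csSup hbdd hn
    · exact csSup_le_csSup (hbdd.insert 0) hS (Set.subset_insert _ _)
  · have h2 : ¬ BddAbove (insert 0 S) := fun h => hbdd (h.mono (Set.subset_insert _ _))
    rw [csSup_of_not_bddAbove h2, csSup_of_not_bddAbove hbdd]

lemma U_succ (hC : IsCSeq C) (hU : UpperSpec C U) {ζ μ : Ordinal} (hζμ : ζ ≤ μ) :
    U ζ (μ + 1) = U ζ μ ∪ {μ + 1} := by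
  have hmin : minAbove C ζ (μ + 1) = μ := by
    unfold minAbove
    rw [hC.2.1 μ]
    have : {ξ ∈ ({μ} : Set Ordinal) | ζ ≤ ξ} = {μ} := by
      ext η
      constructor
      · rintro ⟨h1, -⟩; exact h1
      · intro h; rw [Set.mem_singleton_iff] at h; subst h; exact ⟨rfl, hζμ⟩
    rw [this, csInf_singleton]
  have h := hU.2 ζ (μ + 1) (lt_of_le_of_lt hζμ (ord_lt_succ μ))
  rw [hmin] at h
  exact h

lemma e_succ (hC : IsCSeq C) (hU : UpperSpec C U) (he : ESpec C U e)
    {ζ μ : Ordinal} (hζμ : ζ < μ) : e (μ + 1) ζ = e μ ζ := by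
  rw [he ζ (μ + 1) (hζμ.trans (ord_lt_succ μ)), he ζ μ hζμ]
  have hset : {n : ℕ | ∃ ξ ∈ U ζ (μ + 1), n = (C ξ ∩ Set.Iio ζ).ncard} =
      insert 0 {n : ℕ | ∃ ξ ∈ U ζ μ, n = (C ξ ∩ Set.Iio ζ).ncard} := by
    rw [U_succ hC hU hζμ.le]
    have hzero : (C (μ + 1) ∩ Set.Iio ζ) = ∅ := by
      rw [hC.2.1 μ]
      ext x
      simp only [Set.mem_inter_iff, Set.mem_singleton_iff, Set.mem_Iio, Set.mem_empty_iff_false,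
        iff_false, not_and]
      rintro rfl
      exact not_lt.2 hζμ.le
    ext n
    constructor
    · rintro ⟨ξ, hξ, rfl⟩
      rcases hξ with h | h
      · exact Set.mem_insert_iff.2 (Or.inr ⟨ξ, h, rfl⟩)
      · rw [Set.mem_singleton_iff] at h; subst h
        rw [hzero]
        simp
    · intro hn
      rcases Set.mem_insert_iff.1 hn with rfl | ⟨ξ, hξ, rfl⟩
      · exact ⟨μ + 1, Or.inr rfl, by rw [hzero]; simp⟩
      · exact ⟨ξ, Or.inl hξ, rfl⟩
  rw [hset]
  apply nat_sSup_insert_zero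
  have hμmem : μ ∈ U ζ μ := by
    rw [hU.2 ζ μ hζμ]
    exact Or.inr rfl
  exact ⟨(C μ ∩ Set.Iio ζ).ncard, μ, hμmem, rfl⟩

lemma L_succ (hC : IsCSeq C) (hL : LowerSpec C L) {ξ μ : Ordinal} (hξμ : ξ ≤ μ) :
    L ξ (μ + 1) = L ξ μ := by
  rcases eq_or_lt_of_le hξμ with heq | hlt
  · subst heq
    rw [hL.1]
    by_cases hne : (C (ξ + 1) ∩ Set.Iio ξ) = ∅
    · have h2 := hL.2.1 ξ (ξ + 1) (ord_lt_succ ξ) hne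
      have hmin : minAbove C ξ (ξ + 1) = ξ := by
        unfold minAbove
        rw [hC.2.1 ξ]
        have : {η ∈ ({ξ} : Set Ordinal) | ξ ≤ η} = {ξ} := by
          ext η
          constructor
          · rintro ⟨h1, -⟩; exact h1
          · intro hh; rw [Set.mem_singleton_iff] at hh; subst hh; exact ⟨rfl, le_rfl⟩
        rw [this, csInf_singleton]
      rw [h2, hmin, hL.1]
    · exfalso
      apply hne
      rw [hC.2.1 ξ]
      ext x
      simp only [Set.mem_inter_iff, Set.mem_singleton_iff, Set.mem_Iio,
        Set.mem_empty_iff_false, iff_false, not_and]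
      rintro rfl
      exact lt_irrefl _
  · have hempty : C (μ + 1) ∩ Set.Iio ξ = ∅ := by
      rw [hC.2.1 μ]
      ext x
      simp only [Set.mem_inter_iff, Set.mem_singleton_iff, Set.mem_Iio,
        Set.mem_empty_iff_false, iff_false, not_and]
      rintro rfl
      exact not_lt.2 hlt.le
    have h := hL.2.1 ξ (μ + 1) (hlt.trans (ord_lt_succ μ)) hempty
    have hmin : minAbove C ξ (μ + 1) = μ := by
      unfold minAbove
      rw [hC.2.1 μ]
      have : {η ∈ ({μ} : Set Ordinal) | ξ ≤ η} = {μ} := by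
        ext η
        constructor
        · rintro ⟨h1, -⟩; exact h1
        · intro hh; rw [Set.mem_singleton_iff] at hh; subst hh; exact ⟨rfl, hlt.le⟩
      rw [this, csInf_singleton]
    rw [h, hmin]

lemma osc_succ (hC : IsCSeq C) (hU : UpperSpec C U) (hL : LowerSpec C L)
    (he : ESpec C U e) (hosc : OscSpec L e osc)
    {ξ μ : Ordinal} (hξμ : ξ < μ) (hμ : μ < omega1) :
    osc ξ (μ + 1) = osc ξ μ := by
  have hLs : L ξ (μ + 1) = L ξ μ := L_succ hC hL hξμ.le
  have hLb := L_bounded hC hL μ hμ ξ hξμ.le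
  rw [hosc.2 ξ (μ + 1) (hξμ.trans (ord_lt_succ μ)), hosc.2 ξ μ hξμ, hLs]
  congr 1
  ext ζ
  by_cases h1 : ζ ∈ L ξ μ
  · by_cases h2 : ζ ≠ sInf (L ξ μ)
    · have hζξ : ζ < ξ := hLb.1 h1
      have hπ : sSup {η ∈ L ξ μ | η < ζ} < ξ := by
        have hsubfin : ({η ∈ L ξ μ | η < ζ}).Finite := hLb.2.subset (fun x hx => hx.1)
        have hsubne : ({η ∈ L ξ μ | η < ζ}).Nonempty := by
          refine ⟨sInf (L ξ μ), csInf_mem ⟨ζ, h1⟩, ?_⟩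
          exact lt_of_le_of_ne (csInf_le' h1) (Ne.symm h2)
        have := hsubne.csSup_mem hsubfin
        exact hLb.1 this.1
      have he1 := e_succ hC hU he (hπ.trans hξμ)
      have he2 := e_succ hC hU he (hζξ.trans hξμ)
      simp only [Set.mem_setOf_eq, he1, he2]
    · simp only [Set.mem_setOf_eq]
      push_neg at h2
      simp [h2]
  · simp only [Set.mem_setOf_eq]
    simp [h1]

end Walks

section Values

lemma wFn_eq_one {z : Ordinal → ℂ} {osc : Ordinal → Ordinal → ℕ} {β α : Ordinal}
    (h : β ≤ α) : wFn z osc β α = 1 := if_neg (not_lt.2 h)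

lemma wFn_ne_one {z : Ordinal → ℂ} {osc : Ordinal → Ordinal → ℕ} (hz : RatIndep z)
    {α β : Ordinal} (hαβ : α < β) (hβ : β < omega1) : wFn z osc β α ≠ 1 := by
  rw [wFn, if_pos hαβ]
  intro hpow
  have h1 : ∏ γ ∈ ({α} : Finset Ordinal), z γ ^ (fun _ : Ordinal => ((osc α β : ℤ) + 1)) γ = 1 := by
    rw [Finset.prod_singleton]
    show z α ^ ((osc α β : ℤ) + 1) = 1
    have h2 : ((osc α β : ℤ) + 1) = ((osc α β + 1 : ℕ) : ℤ) := by push_cast; ring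
    rw [h2, zpow_natCast, hpow]
  have h3 := hz.2 {α} (fun _ : Ordinal => ((osc α β : ℤ) + 1))
    (by intro a ha; rw [Finset.mem_singleton] at ha; subst ha; exact hαβ.trans hβ)
    h1 α (Finset.mem_singleton_self α)
  omega

lemma wFn_succ_lt {z : Ordinal → ℂ} {C : Ordinal → Set Ordinal}
    {U L : Ordinal → Ordinal → Set Ordinal} {e : Ordinal → Ordinal → ℕ}
    {osc : Ordinal → Ordinal → ℕ}
    (hC : IsCSeq C) (hU : UpperSpec C U) (hL : LowerSpec C L)
    (he : ESpec C U e) (hosc : OscSpec L e osc)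
    {α μ : Ordinal} (hα : α < μ) (hμ : μ < omega1) :
    wFn z osc (μ + 1) α = wFn z osc μ α := by
  rw [wFn, wFn, if_pos hα, if_pos (hα.trans (ord_lt_succ μ)),
    osc_succ hC hU hL he hosc hα hμ]

lemma finset_ball_radius {ι : Type*} (I : Finset ι) (c : ι → ℂ) (u : ι → Set ℂ)
    (h : ∀ i ∈ I, IsOpen (u i) ∧ c i ∈ u i) :
    ∃ r : ℝ, 0 < r ∧ ∀ i ∈ I, Metric.ball (c i) r ⊆ u i := by
  classical
  induction I using Finset.induction_on with
  | empty => exact ⟨1, one_pos, by simp⟩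
  | @insert a s ha ih =>
    obtain ⟨r, hr, hrs⟩ := ih (fun i hi => h i (Finset.mem_insert_of_mem hi))
    have hha := h a (Finset.mem_insert_self a s)
    obtain ⟨r', hr', hball⟩ := Metric.isOpen_iff.1 hha.1 _ hha.2
    refine ⟨min r r', lt_min hr hr', ?_⟩
    intro i hi
    rcases Finset.mem_insert.1 hi with rfl | hi'
    · exact (Metric.ball_subset_ball (min_le_right _ _)).trans hball
    · exact (Metric.ball_subset_ball (min_le_left _ _)).trans (hrs i hi')

lemma grid_approx (c : ℂ) {δ : ℝ} (hδ : 0 < δ) :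
    ∃ q : ℚ × ℚ, ‖c - ((q.1 : ℂ) + (q.2 : ℂ) * Complex.I)‖ < δ := by
  obtain ⟨q1, hq1a, hq1b⟩ := exists_rat_btwn (by linarith : c.re - δ/3 < c.re)
  obtain ⟨q2, hq2a, hq2b⟩ := exists_rat_btwn (by linarith : c.im - δ/3 < c.im)
  refine ⟨(q1, q2), ?_⟩
  have hre : (c - ((q1 : ℂ) + (q2 : ℂ) * Complex.I)).re = c.re - q1 := by simp
  have him : (c - ((q1 : ℂ) + (q2 : ℂ) * Complex.I)).im = c.im - q2 := by simp
  calc ‖c - ((q1 : ℂ) + (q2 : ℂ) * Complex.I)‖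
      ≤ |(c - ((q1 : ℂ) + (q2 : ℂ) * Complex.I)).re| +
        |(c - ((q1 : ℂ) + (q2 : ℂ) * Complex.I)).im| :=
        Complex.norm_le_abs_re_add_abs_im _
    _ < δ := by
        rw [hre, him, abs_of_pos (by linarith), abs_of_pos (by linarith)]
        linarith

end Values

/-- Moore's L-space is not a Q-set space: some subset of `𝓛` is not a `Gδ` set in the
subspace topology of `𝓛`. -/
theorem stmt6 (C : Ordinal → Set Ordinal) (hC : IsCSeq C)
    (U : Ordinal → Ordinal → Set Ordinal) (hU : UpperSpec C U)
    (L : Ordinal → Ordinal → Set Ordinal) (hL : LowerSpec C L)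
    (e : Ordinal → Ordinal → ℕ) (he : ESpec C U e)
    (osc : Ordinal → Ordinal → ℕ) (hosc : OscSpec L e osc)
    (z : Ordinal → ℂ) (hz : RatIndep z) :
    ∃ A : Set (MooreL z osc), ¬ IsGδ A := by
  classical
  set W : Ordinal → ({a : Ordinal // a < omega1} → ℂ) := fun β i => wFn z osc β i.1 with hW_def
  have hWmem : ∀ β, β < omega1 → W β ∈ MooreL z osc := fun β hβ => ⟨β, hβ, fun i => rfl⟩
  have hWne : ∀ {β β'}, β < β' → β' < omega1 → W β ≠ W β' := by
    intro β β' h h' heq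
    have h2 := congrFun heq ⟨β, h.trans h'⟩
    have h3 : wFn z osc β β = wFn z osc β' β := h2
    rw [wFn_eq_one (le_refl β)] at h3
    exact wFn_ne_one hz h h' h3.symm
  refine ⟨{p | ∃ μ, μ < omega1 ∧ Order.IsSuccLimit μ ∧ p.1 = W μ}, ?_⟩
  intro hGδ
  set A : Set ↥(MooreL z osc) := {p | ∃ μ, μ < omega1 ∧ Order.IsSuccLimit μ ∧ p.1 = W μ} with hA_def
  obtain ⟨T, hTopen, hTct, hTA⟩ := hGδ
  -- successor points are not in A
  have hsucc_notA : ∀ lam, ∀ (h : lam + 1 < omega1),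
      (⟨W (lam + 1), hWmem _ h⟩ : ↥(MooreL z osc)) ∉ A := by
    intro lam h hmem
    obtain ⟨μ, hμω, hμlim, hμeq⟩ := hmem
    rcases lt_trichotomy (lam + 1) μ with hlt | heq | hgt
    · exact hWne hlt hμω hμeq
    · rw [← heq, Ordinal.add_one_eq_succ] at hμlim
      exact Order.not_isSuccLimit_succ lam hμlim
    · exact hWne hgt h hμeq.symm
  rcases Set.eq_empty_or_nonempty T with rfl | hTne
  · rw [Set.sInter_empty] at hTA
    have h1 : (0 : Ordinal) + 1 < omega1 := by
      rw [zero_add]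
      rw [show (1 : Ordinal) = 0 + 1 by rw [zero_add]]
      exact succ_lt_omega1 omega1_pos
    apply hsucc_notA 0 h1
    rw [hTA]
    trivial
  obtain ⟨Useq, hUseq⟩ := hTct.exists_eq_range hTne
  have hAint : A = ⋂ n, Useq n := by rw [hTA, hUseq, Set.sInter_range]
  have hUopen : ∀ n, IsOpen (Useq n) := fun n => hTopen _ (by rw [hUseq]; exact ⟨n, rfl⟩)
  have hAsub : ∀ n, A ⊆ Useq n := fun n => by rw [hAint]; exact Set.iInter_subset _ n
  -- choose an exclusion index for each limit ordinal
  have hex : ∀ lam, ∃ n : ℕ, ∀ (h : lam < omega1), Order.IsSuccLimit lam →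
      (⟨W (lam + 1), hWmem _ (succ_lt_omega1 h)⟩ : ↥(MooreL z osc)) ∉ Useq n := by
    intro lam
    by_cases hl : lam < omega1 ∧ Order.IsSuccLimit lam
    · have hnot := hsucc_notA lam (succ_lt_omega1 hl.1)
      rw [hAint, Set.mem_iInter] at hnot
      push_neg at hnot
      obtain ⟨n, hn⟩ := hnot
      exact ⟨n, fun _ _ => hn⟩
    · exact ⟨0, fun h hlim => absurd ⟨h, hlim⟩ hl⟩
  choose nfun hnfun using hex
  obtain ⟨nstar, hstat⟩ := stat_pigeon stat_limitSet nfun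
  set Λ : Set Ordinal := {x | x ∈ {δ | δ < omega1 ∧ Order.IsSuccLimit δ} ∧ nfun x = nstar} with hΛ_def
  set Ustar : Set ↥(MooreL z osc) := Useq nstar with hUstar_def
  obtain ⟨V, hVopen, hVpre⟩ := isOpen_induced_iff.1 (hUopen nstar)
  -- basic boxes around the limit points inside V
  have hboxex : ∀ μ, ∃ (F : Finset {a : Ordinal // a < omega1}) (r : ℝ), 0 < r ∧
      (μ ∈ Λ → ∀ g : {a : Ordinal // a < omega1} → ℂ,
        (∀ i ∈ F, dist (g i) (W μ i) < r) → g ∈ V) := by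
    intro μ
    by_cases hμ : μ ∈ Λ
    · have hmemA : (⟨W μ, hWmem μ hμ.1.1⟩ : ↥(MooreL z osc)) ∈ A :=
        ⟨μ, hμ.1.1, hμ.1.2, rfl⟩
      have hmemU := hAsub nstar hmemA
      have hmemV : W μ ∈ V := by
        rw [← hVpre] at hmemU
        exact hmemU
      obtain ⟨I, u, hu, hIu⟩ := (isOpen_pi_iff.1 hVopen) (W μ) hmemV
      obtain ⟨r, hr0, hrball⟩ := finset_ball_radius I (W μ) u hu
      refine ⟨I, r, hr0, fun _ g hg => hIu ?_⟩
      rw [Set.mem_pi]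
      intro i hi
      apply hrball i hi
      rw [Metric.mem_ball]
      exact hg i hi
    · exact ⟨∅, 1, one_pos, fun h => absurd h hμ⟩
  choose Ffun rfun hr0 hboxP using hboxex
  set Flt : Ordinal → Finset Ordinal :=
    fun μ => ((Ffun μ).image Subtype.val).filter (· < μ) with hFlt_def
  set γfun : Ordinal → Ordinal := fun μ => (Flt μ).sup id with hγ_def
  have hγreg : ∀ μ ∈ Λ, γfun μ < μ := by
    intro μ hμ
    apply (Finset.sup_lt_iff (hμ.1.2.pos)).2
    intro b hb
    exact (Finset.mem_filter.1 hb).2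
  have hΛsub : Λ ⊆ Set.Iio omega1 := fun x hx => hx.1.1
  obtain ⟨γstar, hγω, hT0⟩ := weak_fodor hstat hΛsub γfun hγreg
  set T0 : Set Ordinal := {μ | μ ∈ Λ ∧ γfun μ ≤ γstar} with hT0_def
  have hFle : ∀ μ ∈ T0, ∀ x ∈ Flt μ, x ∈ Set.Iic γstar := by
    intro μ hμ x hx
    exact le_trans (Finset.le_sup (f := id) hx) hμ.2
  set T1 : Set Ordinal := T0 \ Set.Iic γstar with hT1_def
  have hT1 : ¬ T1.Countable := uncount_diff hT0 (countable_Iic hγω)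
  haveI : Countable ↥(Set.Iic γstar) := (countable_Iic hγω).to_subtype
  set code : Ordinal → Finset (↥(Set.Iic γstar)) :=
    fun μ => (Flt μ).subtype (· ∈ Set.Iic γstar) with hcode_def
  obtain ⟨Sstar, hT2u⟩ := uncount_pigeon hT1 code
  set T2 : Set Ordinal := {x | x ∈ T1 ∧ code x = Sstar} with hT2_def
  set Fstar : Finset Ordinal := Sstar.map (Function.Embedding.subtype _) with hFstar_def
  have hFeq : ∀ μ ∈ T2, Flt μ = Fstar := by
    intro μ hμ
    calc Flt μ = (Flt μ).filter (· ∈ Set.Iic γstar) :=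
          (Finset.filter_true_of_mem (hFle μ hμ.1.1)).symm
      _ = ((Flt μ).subtype (· ∈ Set.Iic γstar)).map (Function.Embedding.subtype _) :=
          (Finset.subtype_map _).symm
      _ = Fstar := by
          have h := hμ.2
          simp only [hcode_def] at h
          rw [h]
  have hFstar_le : ∀ x ∈ Fstar, x ≤ γstar := by
    intro x hx
    obtain ⟨y, -, hy2⟩ := Finset.mem_map.1 hx
    rw [← hy2]
    exact y.2
  -- pigeonhole the radii
  have hmex : ∀ μ, ∃ m : ℕ, μ ∈ T2 → 1 / (m + 1 : ℝ) < rfun μ := by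
    intro μ
    obtain ⟨m, hm⟩ := exists_nat_one_div_lt (hr0 μ)
    exact ⟨m, fun _ => hm⟩
  choose mfun hmfun using hmex
  obtain ⟨mstar, hT3u⟩ := uncount_pigeon hT2u mfun
  set T3 : Set Ordinal := {x | x ∈ T2 ∧ mfun x = mstar} with hT3_def
  set ε : ℝ := 1 / (mstar + 1 : ℝ) with hε_def
  have hε0 : 0 < ε := by positivity
  -- pigeonhole the window values on a rational grid
  have hqex : ∀ (μ : Ordinal) (ξ : ↥Fstar), ∃ q : ℚ × ℚ,
      ‖wFn z osc μ ξ.1 - ((q.1 : ℂ) + (q.2 : ℂ) * Complex.I)‖ < ε / 3 :=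
    fun μ ξ => grid_approx _ (by positivity)
  choose qfun hqfun using hqex
  obtain ⟨qstar, hT4u⟩ := uncount_pigeon hT3u (fun μ => (fun ξ : ↥Fstar => qfun μ ξ))
  set T4 : Set Ordinal := {x | x ∈ T3 ∧ (fun ξ : ↥Fstar => qfun x ξ) = qstar} with hT4_def
  have hT4sub : T4 ⊆ Set.Iio omega1 := fun x hx => hΛsub hx.1.1.1.1.1
  obtain ⟨μ, hμT4, μ', hμ'T4, hlt⟩ := uncount_two hT4u hT4sub
  -- unpack memberships
  have hμΛ : μ ∈ Λ := hμT4.1.1.1.1.1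
  have hμ'Λ : μ' ∈ Λ := hμ'T4.1.1.1.1.1
  have hμω : μ < omega1 := hμΛ.1.1
  have hμ'ω : μ' < omega1 := hμ'Λ.1.1
  have hμlim : Order.IsSuccLimit μ := hμΛ.1.2
  have hμ'lim : Order.IsSuccLimit μ' := hμ'Λ.1.2
  have hγμ : γstar < μ := not_le.1 (hμT4.1.1.1.2)
  have hμ'T2 : μ' ∈ T2 := hμ'T4.1.1
  have hsucclt : μ + 1 < μ' := by
    rw [Ordinal.add_one_eq_succ]
    exact hμ'lim.succ_lt hlt
  -- the successor point W (μ+1) lies in the box of μ'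
  have hkey : W (μ + 1) ∈ V := by
    apply hboxP μ' hμ'Λ (W (μ + 1))
    intro i hi
    by_cases hiμ' : i.1 < μ'
    · have hiF : i.1 ∈ Flt μ' :=
        Finset.mem_filter.2 ⟨Finset.mem_image_of_mem _ hi, hiμ'⟩
      have hiFstar : i.1 ∈ Fstar := by rw [← hFeq μ' hμ'T2]; exact hiF
      have hile : i.1 ≤ γstar := hFstar_le _ hiFstar
      have hiμ : i.1 < μ := lt_of_le_of_lt hile hγμ
      have h1 : W (μ + 1) i = W μ i := wFn_succ_lt hC hU hL he hosc hiμ hμω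
      have hsame : qfun μ ⟨i.1, hiFstar⟩ = qfun μ' ⟨i.1, hiFstar⟩ := by
        have e1 := hμT4.2
        have e2 := hμ'T4.2
        rw [← e2] at e1
        exact congrFun e1 ⟨i.1, hiFstar⟩
      have hd1 := hqfun μ ⟨i.1, hiFstar⟩
      have hd2 := hqfun μ' ⟨i.1, hiFstar⟩
      rw [hsame] at hd1
      have hεlt : ε < rfun μ' := by
        have := hmfun μ' hμ'T2
        rw [hμ'T4.1.2] at this
        exact this
      rw [h1]
      have hWμ : W μ i = wFn z osc μ i.1 := rfl
      have hWμ' : W μ' i = wFn z osc μ' i.1 := rfl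
      rw [hWμ, hWμ', Complex.dist_eq]
      calc ‖wFn z osc μ i.1 - wFn z osc μ' i.1‖
          ≤ ‖wFn z osc μ i.1 -
              (((qfun μ' ⟨i.1, hiFstar⟩).1 : ℂ) + ((qfun μ' ⟨i.1, hiFstar⟩).2 : ℂ) * Complex.I)‖ +
            ‖(((qfun μ' ⟨i.1, hiFstar⟩).1 : ℂ) +
              ((qfun μ' ⟨i.1, hiFstar⟩).2 : ℂ) * Complex.I) - wFn z osc μ' i.1‖ := by
            have := norm_sub_le_norm_sub_add_norm_sub (wFn z osc μ i.1)
              (((qfun μ' ⟨i.1, hiFstar⟩).1 : ℂ) + ((qfun μ' ⟨i.1, hiFstar⟩).2 : ℂ) * Complex.I)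
              (wFn z osc μ' i.1)
            exact this
        _ < ε / 3 + ε / 3 := by
            apply add_lt_add hd1
            rw [← norm_neg]
            simp only [neg_sub]
            exact hd2
        _ < ε := by linarith
        _ < rfun μ' := hεlt
    · have hge : μ' ≤ i.1 := not_lt.1 hiμ'
      have h1 : W (μ + 1) i = 1 := wFn_eq_one (le_trans hsucclt.le hge)
      have h2 : W μ' i = 1 := wFn_eq_one hge
      rw [h1, h2, dist_self]
      exact hr0 μ'
  have hmemU : (⟨W (μ + 1), hWmem _ (succ_lt_omega1 hμω)⟩ : ↥(MooreL z osc)) ∈ Ustar := by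
    rw [hUstar_def, ← hVpre]
    exact hkey
  have hnot := hnfun μ hμω hμlim
  rw [hμΛ.2] at hnot
  exact hnot hmemU
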